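/- Let V be a d-dimensional 𝔽₂-vector space with a fixed basis e₁, …, e_d, and let p ≥ 0. Then I_p(V) is contained in the 𝔽₂-linear span of the elements γ_U, where U ranges over all affine coordinate subspaces of V of dimension p with respect to this basis. -/

import Mathlib

open Finset

/-- The group algebra `𝔽₂[V]` of an additive group `V`. -/
abbrev GroupAlg (V : Type*) [AddCommGroup V] := AddMonoidAlgebra (ZMod 2) V

/-- The augmentation ideal `I₁(V)`: the kernel of the algebra map `𝔽₂[V] → 𝔽₂`
sending every basis element `T_v` to `1`. -/
noncomputable def augIdeal (V : Type*) [AddCommGroup V] : Ideal (GroupAlg V) :=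
  RingHom.ker (AddMonoidAlgebra.lift (ZMod 2) (ZMod 2) V 1)

/-- `γ_G = Σ_{v ∈ G} T_v` for a subset `G ⊆ V`. -/
noncomputable def gammaSet {V : Type*} [AddCommGroup V] [Fintype V] (G : Set V) :
    GroupAlg V :=
  ∑ v ∈ (Set.toFinite G).toFinset, AddMonoidAlgebra.single v (1 : ZMod 2)

namespace QAux

variable {V : Type*} [AddCommGroup V] [Module (ZMod 2) V] [Fintype V]

lemma char2 (x : GroupAlg V) : x + x = 0 := by
  rw [← two_smul (ZMod 2) x, show (2 : ZMod 2) = 0 by decide, zero_smul]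

lemma gammaSet_singleton (v : V) : gammaSet {v} = AddMonoidAlgebra.single v (1 : ZMod 2) := by
  unfold gammaSet
  have h : (Set.toFinite ({v} : Set V)).toFinset = {v} := by ext; simp
  rw [h, Finset.sum_singleton]

lemma gammaSet_union {G H : Set V} (h : Disjoint G H) :
    gammaSet (G ∪ H) = gammaSet G + gammaSet H := by
  classical
  unfold gammaSet
  have h1 : (Set.toFinite (G ∪ H)).toFinset
      = (Set.toFinite G).toFinset ∪ (Set.toFinite H).toFinset := by
    ext a; simp only [Set.Finite.mem_toFinset, Finset.mem_union, Set.mem_union]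
  rw [h1, Finset.sum_union]
  rw [Finset.disjoint_left]
  intro a haG haH
  simp only [Set.Finite.mem_toFinset] at haG haH
  exact Set.disjoint_left.mp h haG haH

lemma single_mul_gammaSet (v : V) (G : Set V) :
    AddMonoidAlgebra.single v (1 : ZMod 2) * gammaSet G = gammaSet ((v + ·) '' G) := by
  classical
  unfold gammaSet
  rw [Finset.mul_sum]
  have himg : (Set.toFinite ((v + ·) '' G)).toFinset
      = (Set.toFinite G).toFinset.image (v + ·) := by
    ext x
    simp only [Set.Finite.mem_toFinset, Finset.mem_image, Set.mem_image]
  rw [himg, Finset.sum_image (fun a _ b _ h => add_left_cancel h)]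
  refine Finset.sum_congr rfl fun w _ => ?_
  rw [AddMonoidAlgebra.single_mul_single, one_mul]

end QAux

namespace QAux2

set_option linter.unusedSectionVars false

open AddMonoidAlgebra QAux

variable {V : Type*} [AddCommGroup V] [Module (ZMod 2) V] [Fintype V]
variable {d : ℕ} (e : Module.Basis (Fin d) (ZMod 2) V)

/-- The set of generators: gammas of p-dimensional affine coordinate subspaces. -/
def gens (p : ℕ) : Set (GroupAlg V) :=
  {x : GroupAlg V | ∃ (v : V) (s : Finset (Fin d)), s.card = p ∧
    x = gammaSet ((v + ·) ''
      ((Submodule.span (ZMod 2) (e '' (s : Set (Fin d)))) : Set V))}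

lemma charV (v : V) : v + v = 0 := by
  rw [← two_smul (ZMod 2) v, show (2 : ZMod 2) = 0 by decide, zero_smul]

lemma span_insert_eq (s : Finset (Fin d)) (j : Fin d) :
    ((Submodule.span (ZMod 2) (e '' ((insert j s : Finset (Fin d)) : Set (Fin d)))) : Set V)
      = ((e j + ·) '' ((Submodule.span (ZMod 2) (e '' (s : Set (Fin d)))) : Set V))
        ∪ ((Submodule.span (ZMod 2) (e '' (s : Set (Fin d)))) : Set V) := by
  ext x
  rw [Finset.coe_insert, Set.image_insert_eq]
  constructor
  · intro hx
    rw [SetLike.mem_coe, Submodule.span_insert, Submodule.mem_sup] at hx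
    obtain ⟨y, hy, z, hz, rfl⟩ := hx
    rw [Submodule.mem_span_singleton] at hy
    obtain ⟨c, rfl⟩ := hy
    have hc : c = 0 ∨ c = 1 := by revert c; decide
    rcases hc with rfl | rfl
    · right; simpa using hz
    · left; exact ⟨z, hz, by simp [add_comm]⟩
  · rintro (⟨z, hz, rfl⟩ | hx)
    · rw [SetLike.mem_coe, Submodule.span_insert, Submodule.mem_sup]
      exact ⟨e j, Submodule.mem_span_singleton_self _, z, hz, rfl⟩
    · rw [SetLike.mem_coe, Submodule.span_insert, Submodule.mem_sup]
      exact ⟨0, Submodule.zero_mem _, x, hx, by simp⟩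

lemma disjoint_translate {s : Finset (Fin d)} {j : Fin d} (hj : j ∉ s) (w : V) :
    Disjoint (((e j + w) + ·) '' ((Submodule.span (ZMod 2) (e '' (s : Set (Fin d)))) : Set V))
      ((w + ·) '' ((Submodule.span (ZMod 2) (e '' (s : Set (Fin d)))) : Set V)) := by
  rw [Set.disjoint_left]
  rintro x ⟨a, ha, rfl⟩ ⟨b, hb, hba⟩
  have hne : e j ∉ Submodule.span (ZMod 2) (e '' ((s : Set (Fin d)))) :=
    e.linearIndependent.notMem_span_image (by simpa using hj)
  apply hne
  have h1 : e j + a = b := by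
    have h2 : w + (e j + a) = w + b := by
      have h0 : e j + w + a = w + b := hba.symm
      rw [← h0]; abel
    exact add_left_cancel h2
  have h3 : e j = b + a := by
    rw [← h1]
    rw [add_assoc, charV, add_zero]
  rw [h3]
  exact Submodule.add_mem _ hb ha

lemma translate_mem_span {s : Finset (Fin d)} {u : V}
    (hu : u ∈ Submodule.span (ZMod 2) (e '' (s : Set (Fin d)))) (w : V) :
    ((u + w) + ·) '' ((Submodule.span (ZMod 2) (e '' (s : Set (Fin d)))) : Set V)
      = (w + ·) '' ((Submodule.span (ZMod 2) (e '' (s : Set (Fin d)))) : Set V) := by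
  ext x
  constructor
  · rintro ⟨a, ha, rfl⟩
    refine ⟨u + a, Submodule.add_mem _ hu ha, ?_⟩
    abel
  · rintro ⟨a, ha, rfl⟩
    refine ⟨u + a, Submodule.add_mem _ hu ha, ?_⟩
    have h2 : (u + w) + (u + a) = (u + u) + (w + a) := by abel
    show (u + w) + (u + a) = w + a
    rw [h2, charV, zero_add]

end QAux2

namespace QAux3

set_option linter.unusedSectionVars false

open AddMonoidAlgebra QAux QAux2

variable {V : Type*} [AddCommGroup V] [Module (ZMod 2) V] [Fintype V]
variable {d : ℕ} (e : Module.Basis (Fin d) (ZMod 2) V)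

lemma image_translate_comp (u w : V) (G : Set V) :
    (u + ·) '' ((w + ·) '' G) = ((u + w) + ·) '' G := by
  rw [Set.image_image]
  refine Set.image_congr fun a _ => ?_
  rw [add_assoc]

lemma stepA (p : ℕ) (w : V) (s : Finset (Fin d)) (hs : s.card = p) (j : Fin d) :
    gammaSet ((w + ·) '' ((Submodule.span (ZMod 2) (e '' (s : Set (Fin d)))) : Set V))
        * (AddMonoidAlgebra.single (e j) (1 : ZMod 2) + 1)
      ∈ Submodule.span (ZMod 2) (gens e (p + 1)) := by
  classical
  have hmul : gammaSet ((w + ·) '' ((Submodule.span (ZMod 2) (e '' (s : Set (Fin d)))) : Set V))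
        * (AddMonoidAlgebra.single (e j) (1 : ZMod 2) + 1)
      = gammaSet (((e j + w) + ·) '' ((Submodule.span (ZMod 2) (e '' (s : Set (Fin d)))) : Set V))
        + gammaSet ((w + ·) '' ((Submodule.span (ZMod 2) (e '' (s : Set (Fin d)))) : Set V)) := by
    rw [mul_add, mul_one, mul_comm, single_mul_gammaSet, image_translate_comp]
  rw [hmul]
  by_cases hj : j ∈ s
  · have hmem : e j ∈ Submodule.span (ZMod 2) (e '' (s : Set (Fin d))) :=
      Submodule.subset_span ⟨j, hj, rfl⟩
    rw [translate_mem_span e hmem w, char2]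
    exact Submodule.zero_mem _
  · rw [← gammaSet_union (disjoint_translate e hj w)]
    refine Submodule.subset_span ⟨w, insert j s, ?_, ?_⟩
    · rw [Finset.card_insert_of_notMem hj, hs]
    · rw [span_insert_eq, Set.image_union, image_translate_comp, add_comm (e j) w]

lemma stepB (p : ℕ) (s : Finset (Fin d)) (hs : s.card = p) (t : Finset (Fin d)) :
    ∀ w : V, gammaSet ((w + ·) '' ((Submodule.span (ZMod 2) (e '' (s : Set (Fin d)))) : Set V))
        * (AddMonoidAlgebra.single (∑ i ∈ t, e i) (1 : ZMod 2) + 1)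
      ∈ Submodule.span (ZMod 2) (gens e (p + 1)) := by
  classical
  induction t using Finset.induction_on with
  | empty =>
    intro w
    rw [Finset.sum_empty, show (AddMonoidAlgebra.single (0 : V) (1 : ZMod 2) : GroupAlg V) = 1
      from AddMonoidAlgebra.one_def.symm, char2, mul_zero]
    exact Submodule.zero_mem _
  | @insert j t hjt ih =>
    intro w
    rw [Finset.sum_insert hjt]
    have key : AddMonoidAlgebra.single (e j + ∑ i ∈ t, e i) (1 : ZMod 2) + 1
        = AddMonoidAlgebra.single (e j) (1 : ZMod 2)
            * (AddMonoidAlgebra.single (∑ i ∈ t, e i) (1 : ZMod 2) + 1)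
          + (AddMonoidAlgebra.single (e j) (1 : ZMod 2) + 1) := by
      rw [mul_add, mul_one, AddMonoidAlgebra.single_mul_single, one_mul]
      have h2 := char2 (AddMonoidAlgebra.single (e j) (1 : ZMod 2) : GroupAlg V)
      linear_combination -h2
    rw [key, mul_add]
    refine Submodule.add_mem _ ?_ (stepA e p w s hs j)
    have hre : gammaSet ((w + ·) '' ((Submodule.span (ZMod 2) (e '' (s : Set (Fin d)))) : Set V))
          * (AddMonoidAlgebra.single (e j) (1 : ZMod 2)
            * (AddMonoidAlgebra.single (∑ i ∈ t, e i) (1 : ZMod 2) + 1))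
        = gammaSet (((e j + w) + ·) '' ((Submodule.span (ZMod 2) (e '' (s : Set (Fin d)))) : Set V))
          * (AddMonoidAlgebra.single (∑ i ∈ t, e i) (1 : ZMod 2) + 1) := by
      rw [mul_left_comm, ← mul_assoc, mul_comm (AddMonoidAlgebra.single (e j) (1 : ZMod 2)),
        mul_comm, mul_comm (gammaSet _), single_mul_gammaSet, image_translate_comp, mul_comm]
    rw [hre]
    exact ih (e j + w)

lemma exists_sum_basis (v : V) : ∃ t : Finset (Fin d), v = ∑ i ∈ t, e i := by
  classical
  refine ⟨Finset.univ.filter (fun i => e.repr v i = 1), ?_⟩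
  conv_lhs => rw [← e.sum_repr v]
  rw [Finset.sum_filter]
  refine Finset.sum_congr rfl fun i _ => ?_
  rcases (show ∀ c : ZMod 2, c = 0 ∨ c = 1 from by decide) (e.repr v i) with h | h <;>
    simp [h]

lemma mem_span_aug {x : GroupAlg V} (hx : x ∈ augIdeal V) :
    x ∈ Submodule.span (ZMod 2)
      {y : GroupAlg V | ∃ v : V, y = AddMonoidAlgebra.single v 1 + 1} := by
  have hx0 : (AddMonoidAlgebra.lift (ZMod 2) (ZMod 2) V) 1 x = 0 := by
    rwa [augIdeal, RingHom.mem_ker] at hx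
  rw [AddMonoidAlgebra.lift_apply] at hx0
  have hx1 : ∑ a ∈ x.coeff.support, x.coeff a = 0 := by simpa [Finsupp.sum] using hx0
  have hrep : x = ∑ v ∈ x.coeff.support, (x.coeff v) • (AddMonoidAlgebra.single v (1 : ZMod 2) + 1) := by
    have h1 : ∀ v, (x.coeff v) • (AddMonoidAlgebra.single v (1 : ZMod 2) + (1 : GroupAlg V))
        = AddMonoidAlgebra.single v (x.coeff v) + (x.coeff v) • (1 : GroupAlg V) := by
      intro v
      rw [smul_add, AddMonoidAlgebra.smul_single', mul_one]
    rw [Finset.sum_congr rfl fun v _ => h1 v, Finset.sum_add_distrib, ← Finset.sum_smul, hx1,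
      zero_smul, add_zero]
    exact (AddMonoidAlgebra.sum_coeff_single x).symm
  rw [hrep]
  exact Submodule.sum_mem _ fun v _ => Submodule.smul_mem _ _ (Submodule.subset_span ⟨v, rfl⟩)

lemma mem_span_gens0 (x : GroupAlg V) : x ∈ Submodule.span (ZMod 2) (gens e 0) := by
  have hsingle : ∀ v : V, AddMonoidAlgebra.single v (1 : ZMod 2) ∈ gens e 0 := by
    intro v
    refine ⟨v, ∅, Finset.card_empty, ?_⟩
    rw [Finset.coe_empty, Set.image_empty, Submodule.span_empty, Submodule.bot_coe,
      Set.image_singleton, add_zero, gammaSet_singleton]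
  have hrep : x = ∑ v ∈ x.coeff.support, (x.coeff v) • AddMonoidAlgebra.single v (1 : ZMod 2) := by
    simp only [AddMonoidAlgebra.smul_single', mul_one]
    exact (AddMonoidAlgebra.sum_coeff_single x).symm
  rw [hrep]
  exact Submodule.sum_mem _ fun v _ =>
    Submodule.smul_mem _ _ (Submodule.subset_span (hsingle v))

lemma mul_mem_span (p : ℕ) {a b : GroupAlg V}
    (ha : a ∈ Submodule.span (ZMod 2) (gens e p))
    (hb : b ∈ Submodule.span (ZMod 2)
      {y : GroupAlg V | ∃ v : V, y = AddMonoidAlgebra.single v 1 + 1}) :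
    a * b ∈ Submodule.span (ZMod 2) (gens e (p + 1)) := by
  refine Submodule.span_induction
    (p := fun a _ => a * b ∈ Submodule.span (ZMod 2) (gens e (p + 1))) ?_ ?_ ?_ ?_ ha
  · intro u hu
    obtain ⟨w, s, hs, rfl⟩ := hu
    refine Submodule.span_induction
      (p := fun b _ => gammaSet ((w + ·) ''
          ((Submodule.span (ZMod 2) (e '' (s : Set (Fin d)))) : Set V)) * b
        ∈ Submodule.span (ZMod 2) (gens e (p + 1))) ?_ ?_ ?_ ?_ hb
    · intro y hy
      obtain ⟨v, rfl⟩ := hy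
      obtain ⟨t, rfl⟩ := exists_sum_basis e v
      exact stepB e p s hs t w
    · beta_reduce; rw [mul_zero]; exact Submodule.zero_mem _
    · intro y z _ _ h1 h2; beta_reduce; rw [mul_add]; exact Submodule.add_mem _ h1 h2
    · intro c y _ h1; beta_reduce; rw [mul_smul_comm]; exact Submodule.smul_mem _ _ h1
  · beta_reduce; rw [zero_mul]; exact Submodule.zero_mem _
  · intro u v _ _ h1 h2; beta_reduce; rw [add_mul]; exact Submodule.add_mem _ h1 h2
  · intro c u _ h1; beta_reduce; rw [smul_mul_assoc]; exact Submodule.smul_mem _ _ h1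

end QAux3

/-- Given a basis `e₁, …, e_d` of `V`, the piece `I_p(V)` of the Quillen filtration
is contained in the `𝔽₂`-linear span of the `γ_U`'s where `U` ranges over the
`p`-dimensional affine coordinate subspaces `U = v + span{e_i : i ∈ s}`, `|s| = p`. -/
theorem quillen_contained_in_coordinate_span
    (d p : ℕ)
    (V : Type*) [AddCommGroup V] [Module (ZMod 2) V] [Fintype V]
    (e : Module.Basis (Fin d) (ZMod 2) V) :
    ((augIdeal V ^ p : Ideal (GroupAlg V)) : Set (GroupAlg V)) ⊆
      (Submodule.span (ZMod 2)
        {x : GroupAlg V | ∃ (v : V) (s : Finset (Fin d)), s.card = p ∧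
          x = gammaSet ((v + ·) ''
            ((Submodule.span (ZMod 2) (e '' (s : Set (Fin d)))) : Set V))} :
        Submodule (ZMod 2) (GroupAlg V)) := by
  induction p with
  | zero => intro x _; exact QAux3.mem_span_gens0 e x
  | succ p ih =>
    intro x hx
    rw [SetLike.mem_coe, pow_succ] at hx
    refine Submodule.mul_induction_on hx (fun a ha b hb => ?_)
      (fun y z hy hz => Submodule.add_mem _ hy hz)
    exact QAux3.mul_mem_span e p (ih ha) (QAux3.mem_span_aug hb)
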